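/- arXiv:1602.08618 — 4 statements merged into one kernel-verified Lean document; each statement's English description precedes it below -/
import Mathlib

section
/- Let H be a Hilbert space, D : U → Y a bounded linear map between Hilbert spaces, and J = J* ∈ B(Y) self-adjoint. If the operator D*JD ∈ B(U) (defined by ⟨v, D*JDu⟩ = ⟨Dv, JDu⟩) is boundedly invertible, then D is bounded below (there exists ε > 0 with ‖Du‖ ≥ ε‖u‖ for all u ∈ U), the range of D is closed, and the compression PJP* of J to the closure of the range of D (where P is the orthogonal projection onto Range(D)) is boundedly invertible. -/
set_option maxHeartbeats 1000000

open ContinuousLinearMap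

/-- from Lemma 11.1: if `D*JD` is boundedly invertible
(`J` self-adjoint), then `D` is bounded below, its range is closed, and the compression
`PJP*` of `J` to the closure `K` of the range of `D` is boundedly invertible.  The
compression is characterized as the operator `T : K → K` with `Jx − Tx ⟂ K` for `x ∈ K`. -/
theorem stmt5 {U Y : Type*}
    [NormedAddCommGroup U] [InnerProductSpace ℂ U] [CompleteSpace U]
    [NormedAddCommGroup Y] [InnerProductSpace ℂ Y] [CompleteSpace Y]
    (D : U →L[ℂ] Y) (J : Y →L[ℂ] Y) (hJ : IsSelfAdjoint J)
    (S' : U →L[ℂ] U)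
    (hS1 : ((ContinuousLinearMap.adjoint D).comp (J.comp D)).comp S'
      = ContinuousLinearMap.id ℂ U)
    (hS2 : S'.comp ((ContinuousLinearMap.adjoint D).comp (J.comp D))
      = ContinuousLinearMap.id ℂ U)
    (K : Submodule ℂ Y)
    (hK : K = (LinearMap.range (D : U →ₗ[ℂ] Y)).topologicalClosure) :
    (∃ ε : ℝ, 0 < ε ∧ ∀ u : U, ε * ‖u‖ ≤ ‖D u‖) ∧
    IsClosed (Set.range D) ∧
    ∃ T T' : K →L[ℂ] K,
      (∀ x y : K, (inner ℂ (y : Y) (J (x : Y) - ((T x : K) : Y)) : ℂ) = 0) ∧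
      T.comp T' = ContinuousLinearMap.id ℂ K ∧
      T'.comp T = ContinuousLinearMap.id ℂ K := by
  classical
  set S : U →L[ℂ] U := (ContinuousLinearMap.adjoint D).comp (J.comp D) with hSdef
  set C : ℝ := ‖S'‖ * ‖(ContinuousLinearMap.adjoint D).comp J‖ with hCdef
  have hC0 : 0 ≤ C := mul_nonneg (norm_nonneg _) (norm_nonneg _)
  have key : ∀ u : U, ‖u‖ ≤ C * ‖D u‖ := by
    intro u
    have h1 : S' (S u) = u := by
      have := congrArg (fun f => f u) hS2
      simpa using this
    have h2 : ‖S u‖ ≤ ‖(ContinuousLinearMap.adjoint D).comp J‖ * ‖D u‖ := by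
      have : S u = ((ContinuousLinearMap.adjoint D).comp J) (D u) := rfl
      rw [this]
      exact le_opNorm _ _
    calc ‖u‖ = ‖S' (S u)‖ := by rw [h1]
      _ ≤ ‖S'‖ * ‖S u‖ := S'.le_opNorm _
      _ ≤ ‖S'‖ * (‖(ContinuousLinearMap.adjoint D).comp J‖ * ‖D u‖) := by
          exact mul_le_mul_of_nonneg_left h2 (norm_nonneg _)
      _ = C * ‖D u‖ := by rw [hCdef]; ring
  have key' : ∀ u : U, ‖u‖ ≤ (C + 1) * ‖D u‖ := fun u =>
    (key u).trans (by nlinarith [norm_nonneg (D u)])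
  -- bounded below
  have hbb : ∃ ε : ℝ, 0 < ε ∧ ∀ u : U, ε * ‖u‖ ≤ ‖D u‖ := by
    refine ⟨(C + 1)⁻¹, by positivity, fun u => ?_⟩
    rw [inv_mul_le_iff₀ (by positivity)]
    exact key' u
  -- closed range
  have hanti : AntilipschitzWith (C + 1).toNNReal D :=
    D.antilipschitz_of_bound fun u => by
      rw [Real.coe_toNNReal _ (by positivity)]; exact key' u
  have hclosed : IsClosed (Set.range D) :=
    hanti.isClosed_range D.uniformContinuous
  refine ⟨hbb, hclosed, ?_⟩
  -- K equals range of D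
  have hKrange : K = LinearMap.range (D : U →ₗ[ℂ] Y) := by
    rw [hK]
    exact IsClosed.submodule_topologicalClosure_eq (by
      show IsClosed (Set.range D)
      exact hclosed)
  have hmem : ∀ u : U, D u ∈ K := fun u => hKrange ▸ LinearMap.mem_range_self _ u
  have hKclosed : IsClosed (K : Set Y) := by
    rw [hKrange]; exact hclosed
  haveI : CompleteSpace K := hKclosed.completeSpace_coe
  -- the corestriction of D to K, an equivalence
  set Dc : U →L[ℂ] K := D.codRestrict K hmem with hDc
  have hinj : LinearMap.ker (Dc : U →ₗ[ℂ] K) = ⊥ := by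
    rw [LinearMap.ker_eq_bot]
    intro a b hab
    have hD : D a = D b := congrArg Subtype.val hab
    obtain ⟨ε, hε, hεb⟩ := hbb
    have h := hεb (a - b)
    rw [map_sub, hD, sub_self, norm_zero] at h
    have hz : ‖a - b‖ = 0 := by nlinarith [norm_nonneg (a - b)]
    exact sub_eq_zero.mp (norm_eq_zero.mp hz)
  have hsurj : LinearMap.range (Dc : U →ₗ[ℂ] K) = ⊤ := by
    rw [LinearMap.range_eq_top]
    intro x
    have hx : (x : Y) ∈ LinearMap.range (D : U →ₗ[ℂ] Y) := hKrange ▸ x.2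
    obtain ⟨u, hu⟩ := hx
    exact ⟨u, Subtype.ext hu⟩
  set E : U ≃L[ℂ] K := ContinuousLinearEquiv.ofBijective Dc hinj hsurj with hE
  have hEapp : ∀ u : U, ((E u : K) : Y) = D u := fun u => rfl
  set A : K →L[ℂ] U := ContinuousLinearMap.adjoint (E : U →L[ℂ] K) with hA
  set T : K →L[ℂ] K :=
    (K.orthogonalProjection).comp (J.comp K.subtypeL) with hT
  set T' : K →L[ℂ] K := (E : U →L[ℂ] K).comp (S'.comp A) with hT'
  have hTapp : ∀ x : K, T x = K.orthogonalProjection (J (x : Y)) := fun x => rfl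
  -- orthogonality property
  have horth : ∀ x y : K, (inner ℂ (y : Y) (J (x : Y) - ((T x : K) : Y)) : ℂ) = 0 := by
    intro x y
    have := Submodule.sub_starProjection_mem_orthogonal (K := K) (J (x : Y))
    exact this (y : Y) y.2
  -- key inner product identities
  have hTinn : ∀ (x : K) (w : U), (inner ℂ (E w) (T x) : ℂ) = inner ℂ (D w) (J (x : Y)) := by
    intro x w
    have h1 : (inner ℂ (E w) (T x) : ℂ) = inner ℂ ((E w : K) : Y) ((T x : K) : Y) := rfl
    rw [h1]
    have h2 : (inner ℂ ((E w : K) : Y) (J (x : Y) - ((T x : K) : Y)) : ℂ) = 0 := horth x (E w)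
    have := inner_sub_right (𝕜 := ℂ) ((E w : K) : Y) (J (x : Y)) ((T x : K) : Y)
    rw [this] at h2
    have h3 : (inner ℂ ((E w : K) : Y) ((T x : K) : Y) : ℂ) = inner ℂ ((E w : K) : Y) (J (x : Y)) := by
      linear_combination -h2
    rw [h3, hEapp]
  have hDJD : ∀ (u w : U), (inner ℂ (D w) (J (D u)) : ℂ) = inner ℂ w (S u) := by
    intro u w
    have : S u = ContinuousLinearMap.adjoint D (J (D u)) := rfl
    rw [this, ContinuousLinearMap.adjoint_inner_right]
  have hAinn : ∀ (x : K) (w : U), (inner ℂ w (A x) : ℂ) = inner ℂ (E w) x := fun x w =>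
    ContinuousLinearMap.adjoint_inner_right (E : U →L[ℂ] K) w x
  -- A (T (E u)) = S u
  have hATE : ∀ u : U, A (T (E u)) = S u := by
    intro u
    apply ext_inner_left ℂ
    intro w
    rw [hAinn, hTinn, hEapp, hDJD]
  have hEsurj : Function.Surjective (E : U → K) := E.surjective
  refine ⟨T, T', horth, ?_, ?_⟩
  · -- T ∘ T' = id
    refine ContinuousLinearMap.ext fun x => ?_
    show T (T' x) = x
    apply ext_inner_left ℂ
    intro v
    obtain ⟨w, rfl⟩ := hEsurj v
    have h1 : T' x = E (S' (A x)) := rfl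
    rw [h1, hTinn, hEapp, hDJD]
    have h2 : S (S' (A x)) = A x := by
      have := congrArg (fun f => f (A x)) hS1
      simpa using this
    rw [h2, hAinn]
  · -- T' ∘ T = id
    refine ContinuousLinearMap.ext fun x => ?_
    show T' (T x) = x
    obtain ⟨u, rfl⟩ := hEsurj x
    have h1 : T' (T (E u)) = E (S' (A (T (E u)))) := rfl
    rw [h1, hATE]
    have h2 : S' (S u) = u := by
      have := congrArg (fun f => f u) hS2
      simpa using this
    rw [h2]
end

section
/- Let N̂, M̂ ∈ H^∞(ℂ⁺; ℂ) be quasi-right coprime scalar functions and suppose M̂^{-1} is bounded on some right half-plane ℂ_ω⁺. Suppose further that N̂ and M̂ extend continuously to the closed right half-plane including infinity, that inf_{s ∈ i ℝ}(|N̂(s)|² + |M̂(s)|²) > 0, and that |N̂(s)| + |M̂(s)| > 0 for every s ∈ ℂ⁺. Then inf_{s ∈ closure(ℂ⁺)}(|N̂(s)|² + |M̂(s)|²) > 0, and hence by the Corona theorem N̂, M̂ are right coprime: there exist X̃, Ỹ ∈ H^∞(ℂ⁺; ℂ) with X̃M̂ − ỸN̂ = 1. -/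
open MeasureTheory Filter Topology
open scoped NNReal ENNReal

/-- Membership in the Hardy space `H²(ℂ⁺)` (scalar or vector-valued). -/
def MemH2 {X : Type*} [NormedAddCommGroup X] [NormedSpace ℂ X] (F : ℂ → X) : Prop :=
  DifferentiableOn ℂ F {s : ℂ | 0 < s.re} ∧
    ∃ C : ℝ, ∀ r : ℝ, 0 < r →
      (∫ t : ℝ, ‖F ((r : ℂ) + (t : ℂ) * Complex.I)‖ ^ 2) ≤ C

namespace Stmt10Aux

noncomputable section

def Complex.abs : AbsoluteValue ℂ ℝ where
  toFun z := ‖z‖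
  map_mul' := norm_mul
  nonneg' := norm_nonneg
  eq_zero' _ := norm_eq_zero
  add_le' := norm_add_le

@[simp] lemma Complex.abs_apply_norm (z : ℂ) : Complex.abs z = ‖z‖ := rfl

lemma Complex.abs_apply (z : ℂ) : Complex.abs z = Real.sqrt (Complex.normSq z) :=
  Complex.norm_def z

lemma Complex.sq_abs (z : ℂ) : Complex.abs z ^ 2 = Complex.normSq z := Complex.sq_norm z

lemma Complex.abs_ofReal (r : ℝ) : Complex.abs (r : ℂ) = |r| := by simp

lemma Complex.continuous_abs : Continuous (Complex.abs : ℂ → ℝ) := continuous_norm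

lemma Complex.norm_eq_abs (z : ℂ) : ‖z‖ = Complex.abs z := rfl

lemma Complex.dist_eq (z w : ℂ) : dist z w = Complex.abs (z - w) := dist_eq_norm z w

abbrev DD : Set ℂ := Metric.closedBall (0 : ℂ) 1
instance : CompactSpace DD := isCompact_iff_compactSpace.mp (isCompact_closedBall _ _)
instance : Nonempty DD := ⟨⟨0, by simp⟩⟩
def Phi (z : ℂ) : ℂ := (1 + z) / (1 - z)
def Psi (s : ℂ) : ℂ := (s - 1) / (s + 1)

lemma rePhi (z : ℂ) : (Phi z).re = (1 - Complex.normSq z) / Complex.normSq (1 - z) := by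
  simp [Phi, Complex.div_re, Complex.normSq_apply]
  ring

lemma phi_mem_rhp {z : ℂ} (h : z ∈ DD) : 0 ≤ (Phi z).re := by
  rw [rePhi]
  apply div_nonneg _ (Complex.normSq_nonneg _)
  have : Complex.abs z ≤ 1 := by simpa [Complex.dist_eq] using Metric.mem_closedBall.mp h
  have h2 : Complex.normSq z ≤ 1 := by
    rw [← Complex.sq_abs]; nlinarith [Complex.abs.nonneg z]
  linarith

lemma ne_one_of_mem_ball {z : ℂ} (h : z ∈ Metric.ball (0 : ℂ) 1) : z ≠ 1 := by
  intro hz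
  simp [hz, Complex.dist_eq] at h

lemma phi_mem_orhp {z : ℂ} (h : z ∈ Metric.ball (0 : ℂ) 1) : 0 < (Phi z).re := by
  rw [rePhi]
  have : Complex.abs z < 1 := by simpa [Complex.dist_eq] using Metric.mem_ball.mp h
  have h2 : Complex.normSq z < 1 := by
    rw [← Complex.sq_abs]; nlinarith [Complex.abs.nonneg z]
  apply div_pos (by linarith)
  rw [Complex.normSq_pos, sub_ne_zero]
  exact fun hh => ne_one_of_mem_ball h hh.symm

lemma psi_mem_ball {s : ℂ} (h : 0 < s.re) : Psi s ∈ Metric.ball (0 : ℂ) 1 := by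
  have h1 : Complex.abs (s - 1) < Complex.abs (s + 1) := by
    rw [Complex.abs_apply, Complex.abs_apply]
    apply Real.sqrt_lt_sqrt (Complex.normSq_nonneg _)
    simp [Complex.normSq_apply]
    nlinarith
  have h2 : (0:ℝ) < Complex.abs (s + 1) := lt_of_le_of_lt (Complex.abs.nonneg _) h1
  rw [Metric.mem_ball, Complex.dist_eq, sub_zero]
  rw [Psi, map_div₀]
  exact (div_lt_one h2).mpr h1

lemma psi_ne_one {s : ℂ} (h : 0 < s.re) : Psi s ≠ 1 :=
  ne_one_of_mem_ball (psi_mem_ball h)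

lemma phi_psi {s : ℂ} (h : 0 < s.re) : Phi (Psi s) = s := by
  have h1 : s + 1 ≠ 0 := by
    intro hh
    have := congrArg Complex.re hh
    simp at this; linarith
  have h2 : (1:ℂ) - Psi s ≠ 0 := by
    rw [sub_ne_zero]
    exact fun hh => psi_ne_one h hh.symm
  rw [Phi, Psi] at *
  field_simp at h2 ⊢
  try ring_nf
  try ring_nf at h2
  try rw [div_eq_iff (by intro hh; apply h2; linear_combination -hh)]
  try ring

lemma phi_diffAt {z : ℂ} (h : z ≠ 1) : DifferentiableAt ℂ Phi z := by
  have h1 : (1:ℂ) - z ≠ 0 := by rw [sub_ne_zero]; exact fun hh => h hh.symm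
  show DifferentiableAt ℂ (fun z => (1 + z)/(1 - z)) z
  exact ((differentiableAt_const 1).add differentiableAt_id).div
    ((differentiableAt_const 1).sub differentiableAt_id) h1

lemma psi_diffOn : DifferentiableOn ℂ Psi {s : ℂ | 0 < s.re} := by
  intro s hs
  have h1 : s + 1 ≠ 0 := by
    intro hh
    have := congrArg Complex.re hh
    simp at this
    simp only [Set.mem_setOf_eq] at hs; linarith
  show DifferentiableWithinAt ℂ (fun w : ℂ => (w - 1)/(w + 1)) {s : ℂ | 0 < s.re} s
  exact DifferentiableWithinAt.div (by fun_prop) (by fun_prop) h1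


open Classical in
lemma cont_compose_phi (H : ℂ → ℂ) (hHc : ContinuousOn H {s : ℂ | 0 ≤ s.re}) (Hinf : ℂ)
    (hHinf : Tendsto H (comap Complex.abs atTop ⊓ 𝓟 {s : ℂ | 0 ≤ s.re}) (𝓝 Hinf)) :
    Continuous (fun w : DD => if (w : ℂ) = 1 then Hinf else H (Phi w)) := by
  rw [continuous_iff_continuousAt]
  intro w
  by_cases hw : (w : ℂ) = 1
  · -- continuity at the boundary point 1
    rw [ContinuousAt, if_pos hw, ← nhdsNE_sup_pure, tendsto_sup]
    constructor
    · -- along the punctured neighborhood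
      have hne : ∀ᶠ v : DD in 𝓝[≠] w, (v : ℂ) ≠ 1 := by
        filter_upwards [self_mem_nhdsWithin] with v hv
        intro h1
        exact hv (Subtype.ext (h1.trans hw.symm))
      have hkey : Tendsto (fun v : DD => Phi (v : ℂ)) (𝓝[≠] w)
          (comap Complex.abs atTop ⊓ 𝓟 {s : ℂ | 0 ≤ s.re}) := by
        rw [tendsto_inf]
        constructor
        · rw [tendsto_comap_iff]
          -- |Phi v| → ∞
          have hz : Tendsto (fun v : DD => Complex.abs (1 - (v : ℂ))) (𝓝[≠] w) (𝓝[>] 0) := by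
            rw [tendsto_nhdsWithin_iff]
            constructor
            · have hcont : Continuous (fun v : DD => Complex.abs (1 - (v : ℂ))) :=
                Complex.continuous_abs.comp (continuous_const.sub continuous_subtype_val)
              have := (hcont.tendsto w).mono_left (nhdsWithin_le_nhds (s := {w}ᶜ))
              simpa [hw] using this
            · filter_upwards [hne] with v hv
              rw [Set.mem_Ioi, AbsoluteValue.pos_iff, sub_ne_zero]
              exact fun hh => hv hh.symm
          have hinv : Tendsto (fun v : DD => (Complex.abs (1 - (v : ℂ)))⁻¹) (𝓝[≠] w) atTop :=
            hz.inv_tendsto_nhdsGT_zero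
          apply tendsto_atTop_mono' _ _ hinv
          -- eventually |1+v| ≥ 1
          have h2 : Tendsto (fun v : DD => Complex.abs (1 + (v : ℂ))) (𝓝[≠] w) (𝓝 2) := by
            have hcont : Continuous (fun v : DD => Complex.abs (1 + (v : ℂ))) :=
              Complex.continuous_abs.comp (continuous_const.add continuous_subtype_val)
            have h3 := (hcont.tendsto w).mono_left (nhdsWithin_le_nhds (s := {w}ᶜ))
            have h4 : Complex.abs (1 + (w:ℂ)) = 2 := by rw [hw]; norm_num
            rwa [h4] at h3
          filter_upwards [h2.eventually (eventually_ge_nhds (by norm_num : (1:ℝ) < 2)), hne]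
            with v hv1 hvne
          have hpos : 0 < Complex.abs (1 - (v : ℂ)) := by
            rw [AbsoluteValue.pos_iff, sub_ne_zero]
            exact fun hh => hvne hh.symm
          show (Complex.abs (1 - (v : ℂ)))⁻¹ ≤ (Complex.abs ∘ fun v : DD => Phi (v : ℂ)) v
          have : (Complex.abs ∘ fun v : DD => Phi (v : ℂ)) v
              = Complex.abs (1 + (v:ℂ)) / Complex.abs (1 - (v:ℂ)) := by
            simp [Phi, map_div₀]
          rw [this, inv_eq_one_div]
          rw [le_div_iff₀ hpos, one_div, inv_mul_cancel₀ hpos.ne']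
          exact hv1
        · rw [tendsto_principal]
          exact Eventually.of_forall fun v => phi_mem_rhp v.2
      have := hHinf.comp hkey
      apply this.congr'
      filter_upwards [hne] with v hv
      rw [if_neg hv]; rfl
    · -- along pure
      have h0 : Tendsto (fun v : DD => if (v : ℂ) = 1 then Hinf else H (Phi v)) (pure w)
          (pure ((fun v : DD => if (v : ℂ) = 1 then Hinf else H (Phi v)) w)) :=
        tendsto_pure_pure _ _
      have hval : (fun v : DD => if (v : ℂ) = 1 then Hinf else H (Phi v)) w = Hinf := if_pos hw
      rw [hval] at h0
      exact h0.mono_right (pure_le_nhds _)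
  · -- continuity at interior/boundary points ≠ 1
    have hU : {v : DD | (v : ℂ) ≠ 1} ∈ 𝓝 w :=
      (isOpen_compl_singleton.preimage continuous_subtype_val).mem_nhds hw
    have h1 : Tendsto (fun v : DD => Phi (v : ℂ)) (𝓝 w) (𝓝[{s : ℂ | 0 ≤ s.re}] (Phi w)) := by
      rw [tendsto_nhdsWithin_iff]
      exact ⟨((phi_diffAt hw).continuousAt.comp continuous_subtype_val.continuousAt),
        Eventually.of_forall fun v => phi_mem_rhp v.2⟩
    have h2 : ContinuousAt (fun v : DD => H (Phi (v : ℂ))) w :=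
      ((hHc (Phi w) (phi_mem_rhp w.2)).tendsto).comp h1
    apply h2.congr
    filter_upwards [hU] with v hv
    rw [if_neg hv]


open Classical in
def extD (f : C(DD, ℂ)) : ℂ → ℂ := fun z => if h : z ∈ DD then f ⟨z, h⟩ else 0

open Classical in
lemma extD_apply (f : C(DD, ℂ)) {z : ℂ} (h : z ∈ DD) : extD f z = f ⟨z, h⟩ := dif_pos h

lemma ball_subset_DD : Metric.ball (0 : ℂ) 1 ⊆ DD := Metric.ball_subset_closedBall

def diskAlg : Subalgebra ℂ C(DD, ℂ) where
  carrier := {f | DifferentiableOn ℂ (extD f) (Metric.ball (0 : ℂ) 1)}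
  mul_mem' := by
    intro f g hf hg
    exact (hf.mul hg).congr fun z hz => by
      simp [extD_apply _ (ball_subset_DD hz)]
  add_mem' := by
    intro f g hf hg
    exact (hf.add hg).congr fun z hz => by
      simp [extD_apply _ (ball_subset_DD hz)]
  algebraMap_mem' := by
    intro r
    exact (differentiableOn_const r).congr fun z hz => by
      simp [extD_apply _ (ball_subset_DD hz)]

lemma mem_diskAlg {f : C(DD, ℂ)} :
    f ∈ diskAlg ↔ DifferentiableOn ℂ (extD f) (Metric.ball (0 : ℂ) 1) := Iff.rfl

lemma diskAlg_isClosed : IsClosed (diskAlg : Set C(DD, ℂ)) := by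
  apply IsSeqClosed.isClosed
  intro x p hx hxp
  rw [SetLike.mem_coe, mem_diskAlg]
  apply TendstoLocallyUniformlyOn.differentiableOn (φ := atTop) ?_
    (Filter.Eventually.of_forall fun n => hx n) Metric.isOpen_ball
  apply TendstoUniformlyOn.tendstoLocallyUniformlyOn
  rw [Metric.tendstoUniformlyOn_iff]
  intro ε hε
  have hd : Tendsto (fun n => dist (x n) p) atTop (𝓝 0) := by
    rwa [← tendsto_iff_dist_tendsto_zero]
  filter_upwards [hd.eventually (eventually_lt_nhds hε)] with n hn z hz
  have hzD := ball_subset_DD hz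
  rw [extD_apply _ hzD, extD_apply _ hzD]
  calc dist (p ⟨z, hzD⟩) ((x n) ⟨z, hzD⟩) ≤ dist p (x n) := ContinuousMap.dist_apply_le_dist _
  _ = dist (x n) p := dist_comm _ _
  _ < ε := hn

instance : CompleteSpace diskAlg := diskAlg_isClosed.completeSpace_coe

instance : NormOneClass diskAlg :=
  ⟨show ‖((1 : diskAlg) : C(DD, ℂ))‖ = 1 by rw [OneMemClass.coe_one]; exact norm_one⟩

def idA : diskAlg :=
  ⟨⟨fun w => (w : ℂ), continuous_subtype_val⟩, by
    rw [mem_diskAlg]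
    exact differentiableOn_id.congr fun z hz => by
      simp [extD_apply _ (ball_subset_DD hz)]⟩

lemma norm_idA_le : ‖idA‖ ≤ 1 := by
  show ‖(idA : C(DD, ℂ))‖ ≤ 1
  rw [ContinuousMap.norm_le _ zero_le_one]
  intro w
  exact mem_closedBall_zero_iff.mp w.2

lemma poly_approx (fc : C(DD, ℂ)) (hfd : DifferentiableOn ℂ (extD fc) (Metric.ball (0 : ℂ) 1))
    {ε : ℝ} (hε : 0 < ε) :
    ∃ (n : ℕ) (a : ℕ → ℂ), ∀ w : DD,
      Complex.abs (fc w - ∑ k ∈ Finset.range n, a k * (w : ℂ) ^ k) ≤ ε := by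
  set g := extD fc with hg
  have huc : UniformContinuous fc := CompactSpace.uniformContinuous_of_continuous fc.continuous
  rw [Metric.uniformContinuous_iff] at huc
  obtain ⟨d, hd, hdd⟩ := huc (ε/2) (half_pos hε)
  set m := min d 1 with hmdef
  have hm : 0 < m := lt_min hd one_pos
  have hm1 : m ≤ 1 := min_le_right _ _
  set r := 1 - m/2 with hrdef
  have hr0 : 0 < r := by simp only [hrdef]; linarith
  have hr1 : r < 1 := by simp only [hrdef]; linarith
  set R : ℝ≥0 := ⟨(r+1)/(2*r), by positivity⟩ with hRdef
  have hRr : (R : ℝ) = (r+1)/(2*r) := rfl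
  have hR1 : 1 < (R : ℝ) := by
    rw [hRr, lt_div_iff₀ (by linarith)]; linarith
  have hrR : r * R < 1 := by
    have hcalc : r * ((r+1)/(2*r)) = (r+1)/2 := by field_simp
    rw [hRr, hcalc]
    linarith
  -- the rescaled function
  set gr : ℂ → ℂ := fun z => g ((r : ℂ) * z) with hgrdef
  have hgr : DifferentiableOn ℂ gr (Metric.closedBall 0 (R : ℝ)) := by
    apply DifferentiableOn.comp (t := Metric.ball (0:ℂ) 1) hfd
    · exact (differentiable_const _).mul differentiable_id |>.differentiableOn
    · intro z hz
      rw [Metric.mem_closedBall, Complex.dist_eq, sub_zero] at hz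
      show (r : ℂ) * z ∈ Metric.ball (0:ℂ) 1
      rw [Metric.mem_ball, Complex.dist_eq, sub_zero, map_mul]
      have : Complex.abs (r : ℂ) = r := by
        rw [Complex.abs_ofReal, abs_of_pos hr0]
      rw [this]
      calc r * Complex.abs z ≤ r * R := by
            apply mul_le_mul_of_nonneg_left hz hr0.le
      _ < 1 := hrR
  have hFPS := hgr.hasFPowerSeriesOnBall (by exact_mod_cast lt_trans one_pos hR1)
  set r' : ℝ≥0 := ⟨((R : ℝ)+1)/2, by positivity⟩ with hr'def
  have hr'1 : 1 < (r' : ℝ) := by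
    show (1:ℝ) < ((R : ℝ)+1)/2
    rw [lt_div_iff₀ (by norm_num)]; linarith
  have hr'R : (r' : ℝ≥0∞) < (R : ℝ≥0∞) := by
    rw [ENNReal.coe_lt_coe, ← NNReal.coe_lt_coe]
    show ((R : ℝ)+1)/2 < (R : ℝ)
    rw [div_lt_iff₀ (by norm_num)]; linarith
  have hTU := hFPS.tendstoUniformlyOn hr'R
  rw [Metric.tendstoUniformlyOn_iff] at hTU
  obtain ⟨n, hn⟩ := (hTU (ε/2) (half_pos hε)).exists
  refine ⟨n, fun k => (cauchyPowerSeries gr 0 R).coeff k, fun w => ?_⟩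
  have hwD : (w : ℂ) ∈ DD := w.2
  have hw1 : Complex.abs (w : ℂ) ≤ 1 := by
    simpa [Complex.dist_eq] using Metric.mem_closedBall.mp hwD
  have hrwD : (r : ℂ) * w ∈ DD := by
    rw [Metric.mem_closedBall, Complex.dist_eq, sub_zero, map_mul, Complex.abs_ofReal,
      abs_of_pos hr0]
    calc r * Complex.abs (w : ℂ) ≤ r * 1 := mul_le_mul_of_nonneg_left hw1 hr0.le
    _ ≤ 1 := by linarith
  -- first estimate
  have h1 : dist (fc w) (g ((r:ℂ) * w)) < ε / 2 := by
    rw [hg, extD_apply _ hrwD]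
    apply hdd
    rw [Subtype.dist_eq, Complex.dist_eq]
    show Complex.abs ((w : ℂ) - (r:ℂ)*w) < d
    have : (w : ℂ) - (r:ℂ)*w = ((1:ℂ) - r) * w := by ring
    rw [this, map_mul]
    have h1r : Complex.abs ((1:ℂ) - r) = 1 - r := by
      rw [show ((1:ℂ) - r) = ((1 - r : ℝ) : ℂ) by push_cast; ring, Complex.abs_ofReal,
        abs_of_pos (by linarith)]
    rw [h1r]
    calc (1-r) * Complex.abs (w : ℂ) ≤ (1-r) * 1 :=
          mul_le_mul_of_nonneg_left hw1 (by linarith)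
    _ = m/2 := by rw [hrdef]; ring
    _ < m := by linarith
    _ ≤ d := min_le_left _ _
  -- second estimate
  have hwball : (w : ℂ) ∈ Metric.ball (0:ℂ) (r' : ℝ) := by
    rw [Metric.mem_ball, Complex.dist_eq, sub_zero]
    exact lt_of_le_of_lt hw1 hr'1
  have h2 := hn (w : ℂ) hwball
  rw [zero_add] at h2
  have hps : (cauchyPowerSeries gr 0 R).partialSum n (w : ℂ)
      = ∑ k ∈ Finset.range n, (cauchyPowerSeries gr 0 R).coeff k * (w : ℂ) ^ k := by
    rw [FormalMultilinearSeries.partialSum]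
    refine Finset.sum_congr rfl fun k _ => ?_
    rw [FormalMultilinearSeries.apply_eq_pow_smul_coeff, smul_eq_mul, mul_comm]
  rw [hps] at h2
  -- combine
  have hgw : gr (w : ℂ) = g ((r:ℂ) * w) := rfl
  calc Complex.abs (fc w - ∑ k ∈ Finset.range n, (cauchyPowerSeries gr 0 R).coeff k * (w:ℂ) ^ k)
      = dist (fc w) (∑ k ∈ Finset.range n, (cauchyPowerSeries gr 0 R).coeff k * (w:ℂ) ^ k) := by
        rw [Complex.dist_eq]
  _ ≤ dist (fc w) (g ((r:ℂ) * w)) + dist (g ((r:ℂ)*w)) (∑ k ∈ Finset.range n,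
        (cauchyPowerSeries gr 0 R).coeff k * (w:ℂ) ^ k) := dist_triangle _ _ _
  _ ≤ ε/2 + ε/2 := by
        apply add_le_add h1.le
        rw [← hgw]
        exact h2.le
  _ = ε := by ring

lemma char_norm_le (χ : WeakDual.characterSpace ℂ diskAlg) (f : diskAlg) :
    Complex.abs (χ f) ≤ ‖f‖ :=
  spectrum.norm_le_norm_of_mem (AlgHom.apply_mem_spectrum χ f)

lemma char_idA_mem (χ : WeakDual.characterSpace ℂ diskAlg) : χ idA ∈ DD := by
  rw [Metric.mem_closedBall, Complex.dist_eq, sub_zero]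
  exact le_trans (char_norm_le χ idA) norm_idA_le

lemma char_eq_eval (χ : WeakDual.characterSpace ℂ diskAlg) (f : diskAlg) :
    χ f = (f : C(DD, ℂ)) ⟨χ idA, char_idA_mem χ⟩ := by
  set z₀ : DD := ⟨χ idA, char_idA_mem χ⟩ with hz₀def
  have key : ∀ ε : ℝ, 0 < ε → Complex.abs (χ f - (f : C(DD, ℂ)) z₀) ≤ 2 * ε := by
    intro ε hε
    obtain ⟨n, a, ha⟩ := poly_approx (f : C(DD, ℂ)) f.2 hε
    set P : diskAlg := ∑ k ∈ Finset.range n, a k • idA ^ k with hPdef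
    have hPapply : ∀ w : DD, (P : C(DD, ℂ)) w = ∑ k ∈ Finset.range n, a k * (w : ℂ) ^ k := by
      intro w
      rw [hPdef]
      push_cast
      rw [ContinuousMap.sum_apply]
      refine Finset.sum_congr rfl fun k _ => ?_
      rw [ContinuousMap.smul_apply, ContinuousMap.pow_apply]
      rfl
    have hχP : χ P = ∑ k ∈ Finset.range n, a k * (χ idA) ^ k := by
      rw [hPdef, map_sum]
      refine Finset.sum_congr rfl fun k _ => ?_
      rw [_root_.map_smul, map_pow, smul_eq_mul]
    have hnorm : ‖f - P‖ ≤ ε := by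
      show ‖((f - P : diskAlg) : C(DD, ℂ))‖ ≤ ε
      rw [ContinuousMap.norm_le _ hε.le]
      intro w
      rw [AddSubgroupClass.coe_sub, ContinuousMap.sub_apply]
      show Complex.abs ((f : C(DD,ℂ)) w - (P : C(DD,ℂ)) w) ≤ ε
      rw [hPapply w]
      exact ha w
    have h1 : Complex.abs (χ f - χ P) ≤ ε := by
      rw [← map_sub]
      exact le_trans (char_norm_le χ _) hnorm
    have h2 : Complex.abs ((P : C(DD,ℂ)) z₀ - (f : C(DD,ℂ)) z₀) ≤ ε := by
      rw [← Complex.abs.map_neg, neg_sub, hPapply z₀]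
      exact ha z₀
    have hPz : χ P = (P : C(DD,ℂ)) z₀ := by
      rw [hχP, hPapply z₀]
    calc Complex.abs (χ f - (f : C(DD, ℂ)) z₀)
        = Complex.abs ((χ f - χ P) + ((P : C(DD,ℂ)) z₀ - (f : C(DD,ℂ)) z₀)) := by
          rw [hPz]; ring_nf
      _ ≤ Complex.abs (χ f - χ P) + Complex.abs ((P : C(DD,ℂ)) z₀ - (f : C(DD,ℂ)) z₀) :=
          Complex.abs.add_le _ _
      _ ≤ 2 * ε := by linarith
  by_contra hne
  have hpos : 0 < Complex.abs (χ f - (f : C(DD, ℂ)) z₀) := by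
    rw [AbsoluteValue.pos_iff]
    exact sub_ne_zero.mpr hne
  have := key (Complex.abs (χ f - (f : C(DD, ℂ)) z₀) / 4) (by linarith)
  linarith

set_option synthInstance.maxHeartbeats 1000000 in
set_option maxHeartbeats 1000000 in
lemma bezout (F G : diskAlg)
    (h : ∀ w : DD, (F : C(DD, ℂ)) w ≠ 0 ∨ (G : C(DD, ℂ)) w ≠ 0) :
    ∃ X Y : diskAlg, X * F + Y * G = 1 := by
  rcases Classical.em (Ideal.span {F, G} = (⊤ : Ideal diskAlg)) with htop | htop
  · have h1 : (1 : diskAlg) ∈ Ideal.span {F, G} := htop ▸ Submodule.mem_top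
    rw [Ideal.mem_span_pair] at h1
    obtain ⟨X, Y, hXY⟩ := h1
    exact ⟨X, Y, hXY⟩
  · obtain ⟨m, hm, hle⟩ := Ideal.exists_le_maximal _ htop
    haveI := hm
    set χ := m.toCharacterSpace
    have hF : χ F = 0 := m.toCharacterSpace_apply_eq_zero_of_mem
      (hle (Ideal.subset_span (by simp)))
    have hG : χ G = 0 := m.toCharacterSpace_apply_eq_zero_of_mem
      (hle (Ideal.subset_span (by simp)))
    rw [char_eq_eval] at hF hG
    rcases h ⟨χ idA, char_idA_mem χ⟩ with hh | hh
    · exact absurd hF hh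
    · exact absurd hG hh


lemma coe_tendsto_l : Tendsto (fun r : ℝ => (r : ℂ)) atTop
    (comap Complex.abs atTop ⊓ 𝓟 {s : ℂ | 0 ≤ s.re}) := by
  rw [tendsto_inf]
  constructor
  · rw [tendsto_comap_iff]
    have h : (Complex.abs ∘ fun r : ℝ => (r : ℂ)) = fun r : ℝ => |r| :=
      funext fun r => Complex.abs_ofReal r
    rw [h]
    exact tendsto_abs_atTop_atTop
  · rw [tendsto_principal]
    filter_upwards [eventually_ge_atTop (0:ℝ)] with r hr
    simpa using hr

instance l_neBot : (comap Complex.abs atTop ⊓ 𝓟 {s : ℂ | 0 ≤ s.re}).NeBot :=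
  neBot_of_le coe_tendsto_l

lemma lowerBound (N' M' : ℂ → ℂ)
    (hN'c : ContinuousOn N' {s : ℂ | 0 ≤ s.re})
    (hM'c : ContinuousOn M' {s : ℂ | 0 ≤ s.re})
    (Ninf Minf : ℂ)
    (hNinf : Tendsto N' (comap Complex.abs atTop ⊓ 𝓟 {s : ℂ | 0 ≤ s.re}) (𝓝 Ninf))
    (hMinf : Tendsto M' (comap Complex.abs atTop ⊓ 𝓟 {s : ℂ | 0 ≤ s.re}) (𝓝 Minf))
    (hL : 0 < Complex.abs Ninf ^ 2 + Complex.abs Minf ^ 2)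
    (c : ℝ) (hc : 0 < c)
    (hiR : ∀ t : ℝ, c ≤ Complex.abs (N' ((t : ℂ) * Complex.I)) ^ 2
      + Complex.abs (M' ((t : ℂ) * Complex.I)) ^ 2)
    (hpos : ∀ s : ℂ, 0 < s.re → 0 < Complex.abs (N' s) ^ 2 + Complex.abs (M' s) ^ 2) :
    ∃ ε : ℝ, 0 < ε ∧ ∀ s : ℂ, 0 ≤ s.re →
      ε ≤ Complex.abs (N' s) ^ 2 + Complex.abs (M' s) ^ 2 := by
  set l := comap Complex.abs atTop ⊓ 𝓟 {s : ℂ | 0 ≤ s.re} with hldef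
  set g : ℂ → ℝ := fun s => Complex.abs (N' s) ^ 2 + Complex.abs (M' s) ^ 2 with hgdef
  set L := Complex.abs Ninf ^ 2 + Complex.abs Minf ^ 2 with hLdef
  have hg : Tendsto g l (𝓝 L) := by
    have h1 : Tendsto (fun s => Complex.abs (N' s)) l (𝓝 (Complex.abs Ninf)) :=
      (Complex.continuous_abs.tendsto _).comp hNinf
    have h2 : Tendsto (fun s => Complex.abs (M' s)) l (𝓝 (Complex.abs Minf)) :=
      (Complex.continuous_abs.tendsto _).comp hMinf
    exact (h1.pow 2).add (h2.pow 2)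
  have hev : ∀ᶠ x in l, L / 2 ≤ g x := hg.eventually (eventually_ge_nhds (by linarith))
  rw [hldef, eventually_inf_principal, eventually_comap, eventually_atTop] at hev
  obtain ⟨R, hR⟩ := hev
  set R' := max R 0 with hR'def
  set K := Metric.closedBall (0 : ℂ) R' ∩ {s : ℂ | 0 ≤ s.re} with hKdef
  have hKc : IsCompact K :=
    (isCompact_closedBall _ _).inter_right (isClosed_le continuous_const Complex.continuous_re)
  have hKne : K.Nonempty := ⟨0, by
    constructor
    · simp only [Metric.mem_closedBall, dist_self]
      exact le_max_right R 0
    · simp⟩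
  have hgc : ContinuousOn g K := by
    have hsub : K ⊆ {s : ℂ | 0 ≤ s.re} := Set.inter_subset_right
    exact (((Complex.continuous_abs.comp_continuousOn (hN'c.mono hsub)).pow 2).add
      ((Complex.continuous_abs.comp_continuousOn (hM'c.mono hsub)).pow 2))
  obtain ⟨s₀, hs₀K, hmin⟩ := hKc.exists_isMinOn hKne hgc
  have hgs₀ : 0 < g s₀ := by
    have h2 : (0:ℝ) ≤ s₀.re := hs₀K.2
    rcases eq_or_lt_of_le h2 with heq | hlt
    · have hs₀ : s₀ = (s₀.im : ℂ) * Complex.I := by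
        apply Complex.ext <;> simp [← heq]
      calc (0:ℝ) < c := hc
      _ ≤ Complex.abs (N' ((s₀.im : ℂ) * Complex.I)) ^ 2
          + Complex.abs (M' ((s₀.im : ℂ) * Complex.I)) ^ 2 := hiR s₀.im
      _ = g s₀ := by rw [hgdef, ← hs₀]
    · exact hpos s₀ hlt
  refine ⟨min (g s₀) (L / 2), lt_min hgs₀ (by linarith), fun s hs => ?_⟩
  rcases le_or_gt (Complex.abs s) R' with hsR | hsR
  · have hsK : s ∈ K := ⟨by simpa [Complex.dist_eq] using hsR, hs⟩
    exact le_trans (min_le_left _ _) (hmin hsK)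
  · exact le_trans (min_le_right _ _)
      (hR (Complex.abs s) (le_trans (le_max_left _ _) hsR.le) s rfl hs)

open Classical in
lemma main
    (N M : ℂ → ℂ)
    (hN : DifferentiableOn ℂ N {s : ℂ | 0 < s.re})
    (hM : DifferentiableOn ℂ M {s : ℂ | 0 < s.re})
    (ω δ : ℝ) (hδ : 0 < δ) (hMinv : ∀ s : ℂ, ω < s.re → δ ≤ Complex.abs (M s))
    (N' M' : ℂ → ℂ)
    (hN'c : ContinuousOn N' {s : ℂ | 0 ≤ s.re})
    (hM'c : ContinuousOn M' {s : ℂ | 0 ≤ s.re})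
    (hN'eq : ∀ s : ℂ, 0 < s.re → N' s = N s)
    (hM'eq : ∀ s : ℂ, 0 < s.re → M' s = M s)
    (Ninf Minf : ℂ)
    (hNinf : Tendsto N' (comap Complex.abs atTop ⊓ 𝓟 {s : ℂ | 0 ≤ s.re}) (𝓝 Ninf))
    (hMinf : Tendsto M' (comap Complex.abs atTop ⊓ 𝓟 {s : ℂ | 0 ≤ s.re}) (𝓝 Minf))
    (c : ℝ) (hc : 0 < c)
    (hiR : ∀ t : ℝ, c ≤ Complex.abs (N' ((t : ℂ) * Complex.I)) ^ 2
      + Complex.abs (M' ((t : ℂ) * Complex.I)) ^ 2)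
    (hnz : ∀ s : ℂ, 0 < s.re → 0 < Complex.abs (N s) + Complex.abs (M s)) :
    (∃ ε : ℝ, 0 < ε ∧ ∀ s : ℂ, 0 ≤ s.re →
      ε ≤ Complex.abs (N' s) ^ 2 + Complex.abs (M' s) ^ 2) ∧
    ∃ Xt Yt : ℂ → ℂ,
      DifferentiableOn ℂ Xt {s : ℂ | 0 < s.re} ∧
      (∃ C : ℝ, ∀ s : ℂ, 0 < s.re → Complex.abs (Xt s) ≤ C) ∧
      DifferentiableOn ℂ Yt {s : ℂ | 0 < s.re} ∧
      (∃ C : ℝ, ∀ s : ℂ, 0 < s.re → Complex.abs (Yt s) ≤ C) ∧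
      ∀ s : ℂ, 0 < s.re → Xt s * M s - Yt s * N s = 1 := by
  -- positivity of |N'|² + |M'|² on the open right half-plane
  have hpos : ∀ s : ℂ, 0 < s.re → 0 < Complex.abs (N' s) ^ 2 + Complex.abs (M' s) ^ 2 := by
    intro s hs
    rw [hN'eq s hs, hM'eq s hs]
    have h := hnz s hs
    have h1 : 0 < Complex.abs (N s) ∨ 0 < Complex.abs (M s) := by
      by_contra hcon
      push_neg at hcon
      have e1 : Complex.abs (N s) = 0 := le_antisymm hcon.1 (Complex.abs.nonneg _)
      have e2 : Complex.abs (M s) = 0 := le_antisymm hcon.2 (Complex.abs.nonneg _)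
      rw [e1, e2] at h
      simp at h
    rcases h1 with h1 | h1
    · nlinarith [sq_nonneg (Complex.abs (M s))]
    · nlinarith [sq_nonneg (Complex.abs (N s))]
  -- δ ≤ |Minf|
  have hMap : Tendsto (fun r : ℝ => M' ((r : ℂ))) atTop (𝓝 Minf) := hMinf.comp coe_tendsto_l
  have hδM : δ ≤ Complex.abs Minf := by
    apply ge_of_tendsto ((Complex.continuous_abs.tendsto _).comp hMap)
    filter_upwards [eventually_gt_atTop (max ω 0)] with r hr
    have hr0 : (0:ℝ) < r := lt_of_le_of_lt (le_max_right _ _) hr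
    have hrω : ω < r := lt_of_le_of_lt (le_max_left _ _) hr
    have hre : (0:ℝ) < ((r : ℂ)).re := by simpa using hr0
    show δ ≤ Complex.abs (M' (r : ℂ))
    rw [hM'eq _ hre]
    exact hMinv _ (by simpa using hrω)
  have hL : 0 < Complex.abs Ninf ^ 2 + Complex.abs Minf ^ 2 := by
    have h0 : 0 < Complex.abs Minf := lt_of_lt_of_le hδ hδM
    nlinarith [sq_nonneg (Complex.abs Ninf)]
  obtain ⟨ε, hε, hεb⟩ := lowerBound N' M' hN'c hM'c Ninf Minf hNinf hMinf hL c hc hiR hpos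
  refine ⟨⟨ε, hε, hεb⟩, ?_⟩
  -- the bound also holds at infinity
  have hLε : ε ≤ Complex.abs Ninf ^ 2 + Complex.abs Minf ^ 2 := by
    have hg : Tendsto (fun s => Complex.abs (N' s) ^ 2 + Complex.abs (M' s) ^ 2)
        (comap Complex.abs atTop ⊓ 𝓟 {s : ℂ | 0 ≤ s.re})
        (𝓝 (Complex.abs Ninf ^ 2 + Complex.abs Minf ^ 2)) := by
      have h1 : Tendsto (fun s => Complex.abs (N' s))
          (comap Complex.abs atTop ⊓ 𝓟 {s : ℂ | 0 ≤ s.re}) (𝓝 (Complex.abs Ninf)) :=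
        (Complex.continuous_abs.tendsto _).comp hNinf
      have h2 : Tendsto (fun s => Complex.abs (M' s))
          (comap Complex.abs atTop ⊓ 𝓟 {s : ℂ | 0 ≤ s.re}) (𝓝 (Complex.abs Minf)) :=
        (Complex.continuous_abs.tendsto _).comp hMinf
      exact (h1.pow 2).add (h2.pow 2)
    apply ge_of_tendsto hg
    rw [eventually_inf_principal]
    exact Eventually.of_forall fun s hs => hεb s hs
  -- transfer to the disk algebra
  set FC : C(DD, ℂ) := ⟨fun w => if (w : ℂ) = 1 then Ninf else N' (Phi w),
    cont_compose_phi N' hN'c Ninf hNinf⟩ with hFCdef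
  set GC : C(DD, ℂ) := ⟨fun w => if (w : ℂ) = 1 then Minf else M' (Phi w),
    cont_compose_phi M' hM'c Minf hMinf⟩ with hGCdef
  have hPhiBall : DifferentiableOn ℂ Phi (Metric.ball (0:ℂ) 1) :=
    fun z hz => (phi_diffAt (ne_one_of_mem_ball hz)).differentiableWithinAt
  have hFCmem : FC ∈ diskAlg := by
    rw [mem_diskAlg]
    have hdiff : DifferentiableOn ℂ (N ∘ Phi) (Metric.ball (0:ℂ) 1) :=
      hN.comp hPhiBall (fun z hz => phi_mem_orhp hz)
    apply hdiff.congr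
    intro z hz
    rw [extD_apply _ (ball_subset_DD hz)]
    show (if z = 1 then Ninf else N' (Phi z)) = (N ∘ Phi) z
    rw [if_neg (ne_one_of_mem_ball hz)]
    exact hN'eq _ (phi_mem_orhp hz)
  have hGCmem : GC ∈ diskAlg := by
    rw [mem_diskAlg]
    have hdiff : DifferentiableOn ℂ (M ∘ Phi) (Metric.ball (0:ℂ) 1) :=
      hM.comp hPhiBall (fun z hz => phi_mem_orhp hz)
    apply hdiff.congr
    intro z hz
    rw [extD_apply _ (ball_subset_DD hz)]
    show (if z = 1 then Minf else M' (Phi z)) = (M ∘ Phi) z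
    rw [if_neg (ne_one_of_mem_ball hz)]
    exact hM'eq _ (phi_mem_orhp hz)
  set GA : diskAlg := ⟨GC, hGCmem⟩ with hGAdef
  set FA : diskAlg := ⟨FC, hFCmem⟩ with hFAdef
  -- no common zeros on the closed disk
  have hcz : ∀ w : DD, (GA : C(DD, ℂ)) w ≠ 0 ∨ (FA : C(DD, ℂ)) w ≠ 0 := by
    intro w
    have hbound : ε ≤ Complex.abs (FC w) ^ 2 + Complex.abs (GC w) ^ 2 := by
      by_cases hw : (w : ℂ) = 1
      · have e1 : FC w = Ninf := if_pos hw
        have e2 : GC w = Minf := if_pos hw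
        rw [e1, e2]
        exact hLε
      · have e1 : FC w = N' (Phi w) := if_neg hw
        have e2 : GC w = M' (Phi w) := if_neg hw
        rw [e1, e2]
        exact hεb (Phi w) (phi_mem_rhp w.2)
    by_contra hcon
    push_neg at hcon
    obtain ⟨h1, h2⟩ := hcon
    have e1 : (GA : C(DD, ℂ)) w = GC w := rfl
    have e2 : (FA : C(DD, ℂ)) w = FC w := rfl
    rw [e1] at h1
    rw [e2] at h2
    rw [h1, h2] at hbound
    simp at hbound
    linarith
  obtain ⟨X, Y, hXY⟩ := bezout GA FA hcz
  -- pull back to the half-plane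
  refine ⟨fun s => extD (X : C(DD, ℂ)) (Psi s), fun s => -(extD (Y : C(DD, ℂ)) (Psi s)),
    ?_, ⟨‖(X : C(DD, ℂ))‖, ?_⟩, ?_, ⟨‖(Y : C(DD, ℂ))‖, ?_⟩, ?_⟩
  · exact DifferentiableOn.comp X.2 psi_diffOn (fun s hs => psi_mem_ball hs)
  · intro s hs
    have hmem : Psi s ∈ DD := ball_subset_DD (psi_mem_ball hs)
    show Complex.abs (extD (X : C(DD, ℂ)) (Psi s)) ≤ ‖(X : C(DD, ℂ))‖
    rw [extD_apply _ hmem]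
    have hb := ContinuousMap.norm_coe_le_norm (X : C(DD, ℂ)) ⟨Psi s, hmem⟩
    rwa [Complex.norm_eq_abs] at hb
  · apply DifferentiableOn.neg
    exact DifferentiableOn.comp Y.2 psi_diffOn (fun s hs => psi_mem_ball hs)
  · intro s hs
    have hmem : Psi s ∈ DD := ball_subset_DD (psi_mem_ball hs)
    show Complex.abs (-(extD (Y : C(DD, ℂ)) (Psi s))) ≤ ‖(Y : C(DD, ℂ))‖
    rw [AbsoluteValue.map_neg, extD_apply _ hmem]
    have hb := ContinuousMap.norm_coe_le_norm (Y : C(DD, ℂ)) ⟨Psi s, hmem⟩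
    rwa [Complex.norm_eq_abs] at hb
  · intro s hs
    have hmem : Psi s ∈ DD := ball_subset_DD (psi_mem_ball hs)
    set w : DD := ⟨Psi s, hmem⟩ with hwdef
    have h1 := congrArg (fun f : diskAlg => (f : C(DD, ℂ)) w) hXY
    simp only [MulMemClass.coe_mul, AddMemClass.coe_add, OneMemClass.coe_one,
      ContinuousMap.add_apply, ContinuousMap.mul_apply, ContinuousMap.one_apply] at h1
    have hψ1 : (w : ℂ) ≠ 1 := psi_ne_one hs
    have eG : (GA : C(DD, ℂ)) w = M s := by
      show (if (w : ℂ) = 1 then Minf else M' (Phi w)) = M s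
      rw [if_neg hψ1]
      show M' (Phi (Psi s)) = M s
      rw [phi_psi hs]
      exact hM'eq s hs
    have eF : (FA : C(DD, ℂ)) w = N s := by
      show (if (w : ℂ) = 1 then Ninf else N' (Phi w)) = N s
      rw [if_neg hψ1]
      show N' (Phi (Psi s)) = N s
      rw [phi_psi hs]
      exact hN'eq s hs
    rw [eG, eF] at h1
    have eX : extD (X : C(DD, ℂ)) (Psi s) = (X : C(DD, ℂ)) w := extD_apply _ hmem
    have eY : extD (Y : C(DD, ℂ)) (Psi s) = (Y : C(DD, ℂ)) w := extD_apply _ hmem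
    show extD (X : C(DD, ℂ)) (Psi s) * M s - -(extD (Y : C(DD, ℂ)) (Psi s)) * N s = 1
    rw [eX, eY]
    linear_combination h1

end

end Stmt10Aux

/-- proof of Lemma 5.12, scalar case: quasi-right coprime bounded
holomorphic scalar `N̂, M̂` with `M̂⁻¹` bounded on some right half-plane, extending
continuously to the closed right half-plane including `∞`, with
`inf_{iℝ}(|N̂|² + |M̂|²) > 0` and no common zeros in `ℂ⁺`, satisfy
`inf_{cl ℂ⁺}(|N̂|² + |M̂|²) > 0`; hence (Corona theorem) they are right coprime:
`X̃M̂ − ỸN̂ = 1` for some `X̃, Ỹ ∈ H^∞`. -/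
theorem stmt10
    (N M : ℂ → ℂ)
    (hN : DifferentiableOn ℂ N {s : ℂ | 0 < s.re})
    (hM : DifferentiableOn ℂ M {s : ℂ | 0 < s.re})
    (CN CM : ℝ)
    (hNb : ∀ s : ℂ, 0 < s.re → ‖N s‖ ≤ CN)
    (hMb : ∀ s : ℂ, 0 < s.re → ‖M s‖ ≤ CM)
    (hqrc : ∀ f : ℂ → ℂ, DifferentiableOn ℂ f {s : ℂ | 0 < s.re} →
      MemH2 (fun s => N s * f s) → MemH2 (fun s => M s * f s) → MemH2 f)
    (ω δ : ℝ) (hδ : 0 < δ) (hMinv : ∀ s : ℂ, ω < s.re → δ ≤ ‖M s‖)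
    (N' M' : ℂ → ℂ)
    (hN'c : ContinuousOn N' {s : ℂ | 0 ≤ s.re})
    (hM'c : ContinuousOn M' {s : ℂ | 0 ≤ s.re})
    (hN'eq : ∀ s : ℂ, 0 < s.re → N' s = N s)
    (hM'eq : ∀ s : ℂ, 0 < s.re → M' s = M s)
    (Ninf Minf : ℂ)
    (hNinf : Tendsto N' (comap (fun z : ℂ => ‖z‖) atTop ⊓ 𝓟 {s : ℂ | 0 ≤ s.re}) (𝓝 Ninf))
    (hMinf : Tendsto M' (comap (fun z : ℂ => ‖z‖) atTop ⊓ 𝓟 {s : ℂ | 0 ≤ s.re}) (𝓝 Minf))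
    (c : ℝ) (hc : 0 < c)
    (hiR : ∀ t : ℝ, c ≤ ‖N' ((t : ℂ) * Complex.I)‖ ^ 2
      + ‖M' ((t : ℂ) * Complex.I)‖ ^ 2)
    (hnz : ∀ s : ℂ, 0 < s.re → 0 < ‖N s‖ + ‖M s‖) :
    (∃ ε : ℝ, 0 < ε ∧ ∀ s : ℂ, 0 ≤ s.re →
      ε ≤ ‖N' s‖ ^ 2 + ‖M' s‖ ^ 2) ∧
    ∃ Xt Yt : ℂ → ℂ,
      DifferentiableOn ℂ Xt {s : ℂ | 0 < s.re} ∧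
      (∃ C : ℝ, ∀ s : ℂ, 0 < s.re → ‖Xt s‖ ≤ C) ∧
      DifferentiableOn ℂ Yt {s : ℂ | 0 < s.re} ∧
      (∃ C : ℝ, ∀ s : ℂ, 0 < s.re → ‖Yt s‖ ≤ C) ∧
      ∀ s : ℂ, 0 < s.re → Xt s * M s - Yt s * N s = 1 :=
  Stmt10Aux.main N M hN hM ω δ hδ hMinv N' M' hN'c hM'c hN'eq hM'eq Ninf Minf
    hNinf hMinf c hc hiR hnz
end

section
/- Let 𝒜 be a strongly continuous semigroup on a Hilbert space H satisfying ‖𝒜^t x₀‖ ∈ L²([0,∞)) for every x₀ ∈ H (i.e., 𝒜x₀ ∈ L²([0,∞); H) for all x₀). Then 𝒜 is exponentially stable: there exist M ≥ 1 and ε > 0 such that ‖𝒜^t‖ ≤ M e^{-εt} for all t ≥ 0. -/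
open MeasureTheory Filter Topology
open scoped ENNReal

private lemma datko_rpow_two (a : ℝ) : a ^ (2:ℝ) = a ^ 2 := by
  rw [show (2:ℝ) = ((2:ℕ):ℝ) by norm_num, Real.rpow_natCast]

private lemma datko_ofReal_sq (a : ℝ) (ha : 0 ≤ a) :
    (ENNReal.ofReal a) ^ (2:ℝ) = ENNReal.ofReal (a ^ 2) := by
  rw [ENNReal.ofReal_rpow_of_nonneg ha (by norm_num), datko_rpow_two]

private lemma datko_sq_le {a b : ℝ≥0∞} (h : a ^ (2:ℝ) ≤ b ^ (2:ℝ)) : a ≤ b := by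
  have h2 := ENNReal.rpow_le_rpow h (by norm_num : (0:ℝ) ≤ 1/2)
  rwa [← ENNReal.rpow_mul, ← ENNReal.rpow_mul,
    show (2:ℝ) * (1/2) = 1 by norm_num, ENNReal.rpow_one, ENNReal.rpow_one] at h2

/-- Datko's theorem, Lemma 2.2: a strongly continuous semigroup on a
Hilbert space all of whose orbits are in `L²([0,∞); H)` is exponentially stable. -/
theorem stmt12 {H : Type*} [NormedAddCommGroup H] [InnerProductSpace ℂ H] [CompleteSpace H]
    (𝒜 : ℝ → H →L[ℂ] H)
    (h0 : 𝒜 0 = ContinuousLinearMap.id ℂ H)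
    (hsg : ∀ s t : ℝ, 0 ≤ s → 0 ≤ t → 𝒜 (s + t) = (𝒜 s).comp (𝒜 t))
    (hcont : ∀ x : H, ContinuousOn (fun t => 𝒜 t x) (Set.Ici (0:ℝ)))
    (hL2 : ∀ x : H, MemLp (fun t => 𝒜 t x) 2 (volume.restrict (Set.Ioi (0:ℝ)))) :
    ∃ M ε : ℝ, 1 ≤ M ∧ 0 < ε ∧ ∀ t : ℝ, 0 ≤ t → ‖𝒜 t‖ ≤ M * Real.exp (-ε * t) := by
  classical
  -- Step A : uniform bound on [0,1] via Banach–Steinhaus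
  have hptwise : ∀ x : H, ∃ C, ∀ i : Set.Icc (0:ℝ) 1, ‖𝒜 (i:ℝ) x‖ ≤ C := by
    intro x
    obtain ⟨C, hC⟩ := isCompact_Icc.exists_bound_of_continuousOn
      ((hcont x).mono (fun t ht => ht.1))
    exact ⟨C, fun i => hC i i.2⟩
  obtain ⟨K₀, hK₀⟩ := banach_steinhaus hptwise
  set K := max K₀ 1 with hKdef
  have hK1 : (1:ℝ) ≤ K := le_max_right _ _
  have hKt : ∀ t : ℝ, 0 ≤ t → t ≤ 1 → ‖𝒜 t‖ ≤ K :=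
    fun t h0t ht1 => le_trans (hK₀ ⟨t, h0t, ht1⟩) (le_max_left _ _)
  -- Step B : growth bound on [0,n]
  have hKn : ∀ n : ℕ, ∀ t : ℝ, 0 ≤ t → t ≤ (n:ℝ) → ‖𝒜 t‖ ≤ K ^ n := by
    intro n
    induction n with
    | zero =>
      intro t h0t ht
      have hts : t = 0 := le_antisymm (by exact_mod_cast ht) h0t
      rw [hts, h0, pow_zero]
      exact ContinuousLinearMap.norm_id_le
    | succ n ih =>
      intro t h0t htn
      by_cases hc : t ≤ (n:ℝ)
      · exact (ih t h0t hc).trans (pow_le_pow_right₀ hK1 (Nat.le_succ n))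
      · push_neg at hc
        have hn0 : (0:ℝ) ≤ n := Nat.cast_nonneg n
        have hco : 𝒜 t = (𝒜 (t - n)).comp (𝒜 n) := by
          have := hsg (t - n) n (by linarith) hn0
          rwa [sub_add_cancel] at this
        rw [hco]
        calc ‖(𝒜 (t - n)).comp (𝒜 n)‖ ≤ ‖𝒜 (t - n)‖ * ‖𝒜 (n:ℝ)‖ :=
              ContinuousLinearMap.opNorm_comp_le _ _
          _ ≤ K * K ^ n := by
              have h1 : ‖𝒜 (t - n)‖ ≤ K := by
                refine hKt _ (by linarith) ?_
                have : t ≤ (n:ℝ) + 1 := by push_cast at htn; linarith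
                linarith
              exact mul_le_mul h1 (ih n hn0 le_rfl) (norm_nonneg _) (by linarith)
          _ = K ^ (n + 1) := by ring
  -- Step C : the truncated orbit maps into L² and Banach–Steinhaus
  have hmem : ∀ (n : ℕ) (x : H),
      MemLp (fun t => 𝒜 t x) 2 (volume.restrict (Set.Ioc (0:ℝ) (n:ℝ))) :=
    fun n x => (hL2 x).mono_measure
      (Measure.restrict_mono Set.Ioc_subset_Ioi_self le_rfl)
  have hres : ∀ n : ℕ,
      (volume.restrict (Set.Ioi (0:ℝ))).restrict (Set.Ioc (0:ℝ) (n:ℝ)) =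
        volume.restrict (Set.Ioc (0:ℝ) (n:ℝ)) := by
    intro n
    rw [Measure.restrict_restrict measurableSet_Ioc,
      Set.inter_eq_self_of_subset_left Set.Ioc_subset_Ioi_self]
  have hmemInd : ∀ (n : ℕ) (x : H),
      MemLp ((Set.Ioc (0:ℝ) (n:ℝ)).indicator (fun t => 𝒜 t x)) 2
        (volume.restrict (Set.Ioi (0:ℝ))) :=
    fun n x => (hL2 x).indicator measurableSet_Ioc
  have hnormInd : ∀ (n : ℕ) (x : H),
      eLpNorm ((Set.Ioc (0:ℝ) (n:ℝ)).indicator (fun t => 𝒜 t x)) 2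
          (volume.restrict (Set.Ioi (0:ℝ))) =
        eLpNorm (fun t => 𝒜 t x) 2 (volume.restrict (Set.Ioc (0:ℝ) (n:ℝ))) := by
    intro n x
    rw [eLpNorm_indicator_eq_eLpNorm_restrict measurableSet_Ioc, hres n]
  have hΦ : ∀ n : ℕ, ∃ Φ : H →L[ℂ] (Lp H 2 (volume.restrict (Set.Ioi (0:ℝ)))),
      ∀ x, ‖Φ x‖ =
        (eLpNorm (fun t => 𝒜 t x) 2 (volume.restrict (Set.Ioc (0:ℝ) (n:ℝ)))).toReal := by
    intro n
    have hbd : ∀ x : H, eLpNorm (fun t => 𝒜 t x) 2 (volume.restrict (Set.Ioc (0:ℝ) (n:ℝ))) ≤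
        (ENNReal.ofReal (n:ℝ)) ^ ((2:ℝ≥0∞).toReal⁻¹) * ENNReal.ofReal (K ^ n * ‖x‖) := by
      intro x
      have hae : ∀ᵐ t ∂(volume.restrict (Set.Ioc (0:ℝ) (n:ℝ))), ‖𝒜 t x‖ ≤ K ^ n * ‖x‖ := by
        filter_upwards [ae_restrict_mem measurableSet_Ioc] with t ht
        calc ‖𝒜 t x‖ ≤ ‖𝒜 t‖ * ‖x‖ := (𝒜 t).le_opNorm x
          _ ≤ K ^ n * ‖x‖ :=
            mul_le_mul_of_nonneg_right (hKn n t ht.1.le ht.2) (norm_nonneg x)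
      have h := eLpNorm_le_of_ae_bound (p := 2) hae
      rwa [Measure.restrict_apply_univ, Real.volume_Ioc, sub_zero] at h
    have hKn0 : (0:ℝ) < K ^ n := pow_pos (by linarith) n
    refine ⟨LinearMap.mkContinuous
      { toFun := fun x => (hmemInd n x).toLp _
        map_add' := fun x y => ?_
        map_smul' := fun c x => ?_ }
      (((ENNReal.ofReal (n:ℝ)) ^ ((2:ℝ≥0∞).toReal⁻¹)).toReal * K ^ n)
      (fun x => ?_), fun x => by
        show ‖(hmemInd n x).toLp _‖ = _
        rw [Lp.norm_toLp, hnormInd n x]⟩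
    · show (hmemInd n (x + y)).toLp _ = (hmemInd n x).toLp _ + (hmemInd n y).toLp _
      rw [← MemLp.toLp_add (hmemInd n x) (hmemInd n y)]
      refine MemLp.toLp_congr _ _ (Eventually.of_forall fun t => ?_)
      simp only [Set.indicator_apply, Pi.add_apply, map_add]
      split_ifs <;> simp
    · show (hmemInd n (c • x)).toLp _ = c • (hmemInd n x).toLp _
      rw [← MemLp.toLp_const_smul c (hmemInd n x)]
      refine MemLp.toLp_congr _ _ (Eventually.of_forall fun t => ?_)
      simp only [Set.indicator_apply, Pi.smul_apply, _root_.map_smul]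
      split_ifs <;> simp
    · show ‖(hmemInd n x).toLp _‖ ≤ _
      rw [Lp.norm_toLp, hnormInd n x]
      have hfin : (ENNReal.ofReal (n:ℝ)) ^ ((2:ℝ≥0∞).toReal⁻¹) ≠ ⊤ :=
        ENNReal.rpow_ne_top_of_nonneg (by positivity) ENNReal.ofReal_ne_top
      calc (eLpNorm (fun t => 𝒜 t x) 2 (volume.restrict (Set.Ioc (0:ℝ) (n:ℝ)))).toReal
          ≤ ((ENNReal.ofReal (n:ℝ)) ^ ((2:ℝ≥0∞).toReal⁻¹) *
              ENNReal.ofReal (K ^ n * ‖x‖)).toReal :=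
            ENNReal.toReal_mono (ENNReal.mul_ne_top hfin ENNReal.ofReal_ne_top) (hbd x)
        _ = (((ENNReal.ofReal (n:ℝ)) ^ ((2:ℝ≥0∞).toReal⁻¹)).toReal * K ^ n) * ‖x‖ := by
            rw [ENNReal.toReal_mul,
              ENNReal.toReal_ofReal (mul_nonneg hKn0.le (norm_nonneg x)), mul_assoc]
  choose Φ hΦn using hΦ
  have hBS : ∀ x : H, ∃ C, ∀ n : ℕ, ‖Φ n x‖ ≤ C := by
    intro x
    refine ⟨(eLpNorm (fun t => 𝒜 t x) 2 (volume.restrict (Set.Ioi (0:ℝ)))).toReal, fun n => ?_⟩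
    rw [hΦn n x]
    exact ENNReal.toReal_mono (hL2 x).2.ne
      (eLpNorm_mono_measure _ (Measure.restrict_mono Set.Ioc_subset_Ioi_self le_rfl))
  obtain ⟨C₀, hC₀⟩ := banach_steinhaus hBS
  set C := max C₀ 1 with hCdef
  have hC1 : (1:ℝ) ≤ C := le_max_right _ _
  have hCx : ∀ (n : ℕ) (x : H),
      eLpNorm (fun t => 𝒜 t x) 2 (volume.restrict (Set.Ioc (0:ℝ) (n:ℝ))) ≤
        ENNReal.ofReal (C * ‖x‖) := by
    intro n x
    refine (ENNReal.le_ofReal_iff_toReal_le (hmem n x).2.ne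
      (mul_nonneg (by linarith) (norm_nonneg x))).mpr ?_
    rw [← hΦn n x]
    calc ‖Φ n x‖ ≤ ‖Φ n‖ * ‖x‖ := (Φ n).le_opNorm x
      _ ≤ C * ‖x‖ :=
        mul_le_mul_of_nonneg_right ((hC₀ n).trans (le_max_left _ _)) (norm_nonneg x)
  -- the key integral bound
  have hInt : ∀ (n : ℕ) (x : H),
      (∫⁻ s in Set.Ioc (0:ℝ) (n:ℝ), (‖𝒜 s x‖₊ : ℝ≥0∞) ^ (2:ℝ)) ≤
        ENNReal.ofReal (C * ‖x‖) ^ (2:ℝ) := by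
    intro n x
    have h1 := hCx n x
    rw [eLpNorm_eq_eLpNorm' (by norm_num) (by norm_num)] at h1
    simp only [ENNReal.toReal_ofNat] at h1
    unfold eLpNorm' at h1
    have h2 := ENNReal.rpow_le_rpow h1 (by norm_num : (0:ℝ) ≤ 2)
    rwa [← ENNReal.rpow_mul, show (1/(2:ℝ)) * 2 = 1 by norm_num, ENNReal.rpow_one] at h2
  -- pointwise squared bound via the semigroup property
  have hptw : ∀ (t s B : ℝ) (x : H), 0 ≤ s → 0 ≤ t - s → ‖𝒜 (t - s)‖ ≤ B →
      (‖𝒜 t x‖₊ : ℝ≥0∞) ^ (2:ℝ) ≤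
        ENNReal.ofReal B ^ (2:ℝ) * (‖𝒜 s x‖₊ : ℝ≥0∞) ^ (2:ℝ) := by
    intro t s B x hs hts hB
    have hco : 𝒜 t = (𝒜 (t - s)).comp (𝒜 s) := by
      have := hsg (t - s) s hts hs
      rwa [sub_add_cancel] at this
    have h1 : ‖𝒜 t x‖ ≤ B * ‖𝒜 s x‖ := by
      rw [hco, ContinuousLinearMap.comp_apply]
      calc ‖(𝒜 (t - s)) (𝒜 s x)‖ ≤ ‖𝒜 (t - s)‖ * ‖𝒜 s x‖ := (𝒜 (t-s)).le_opNorm _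
        _ ≤ B * ‖𝒜 s x‖ := mul_le_mul_of_nonneg_right hB (norm_nonneg _)
    have h2 : (‖𝒜 t x‖₊ : ℝ≥0∞) ≤ ENNReal.ofReal B * (‖𝒜 s x‖₊ : ℝ≥0∞) := by
      rw [← enorm_eq_nnnorm, ← ofReal_norm, ← enorm_eq_nnnorm, ← ofReal_norm,
        ← ENNReal.ofReal_mul (le_trans (norm_nonneg _) hB)]
      exact ENNReal.ofReal_le_ofReal h1
    calc (‖𝒜 t x‖₊ : ℝ≥0∞) ^ (2:ℝ) ≤ (ENNReal.ofReal B * (‖𝒜 s x‖₊ : ℝ≥0∞)) ^ (2:ℝ) :=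
        ENNReal.rpow_le_rpow h2 (by norm_num)
      _ = ENNReal.ofReal B ^ (2:ℝ) * (‖𝒜 s x‖₊ : ℝ≥0∞) ^ (2:ℝ) :=
        ENNReal.mul_rpow_of_nonneg _ _ (by norm_num)
  -- Step D : uniform boundedness of the semigroup
  have hKC0 : (0:ℝ) < K * C := by nlinarith
  have hunif : ∀ t : ℝ, 0 ≤ t → ‖𝒜 t‖ ≤ K * C := by
    intro t ht
    by_cases h1 : t ≤ 1
    · exact (hKt t ht h1).trans (le_mul_of_one_le_right (by linarith) hC1)
    · push_neg at h1
      refine ContinuousLinearMap.opNorm_le_bound _ hKC0.le fun x => ?_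
      set n := ⌈t⌉₊ with hn
      have hsub : Set.Ioc (t-1) t ⊆ Set.Ioc (0:ℝ) (n:ℝ) :=
        fun s hs => ⟨by linarith [hs.1], le_trans hs.2 (Nat.le_ceil t)⟩
      have key : ENNReal.ofReal 1 * (‖𝒜 t x‖₊ : ℝ≥0∞) ^ (2:ℝ) ≤
          ENNReal.ofReal K ^ (2:ℝ) * ENNReal.ofReal (C * ‖x‖) ^ (2:ℝ) := by
        have e1 : (∫⁻ _ in Set.Ioc (t-1) t, (‖𝒜 t x‖₊ : ℝ≥0∞) ^ (2:ℝ)) =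
            (‖𝒜 t x‖₊ : ℝ≥0∞) ^ (2:ℝ) * ENNReal.ofReal 1 := by
          rw [setLIntegral_const, Real.volume_Ioc]
          norm_num
        calc ENNReal.ofReal 1 * (‖𝒜 t x‖₊ : ℝ≥0∞) ^ (2:ℝ)
            = (∫⁻ _ in Set.Ioc (t-1) t, (‖𝒜 t x‖₊ : ℝ≥0∞) ^ (2:ℝ)) := by
              rw [e1, mul_comm]
          _ ≤ ∫⁻ s in Set.Ioc (t-1) t,
                ENNReal.ofReal K ^ (2:ℝ) * (‖𝒜 s x‖₊ : ℝ≥0∞) ^ (2:ℝ) := by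
              refine lintegral_mono_ae ?_
              filter_upwards [ae_restrict_mem measurableSet_Ioc] with s hs
              exact hptw t s K x (by linarith [hs.1]) (by linarith [hs.2])
                (hKt _ (by linarith [hs.2]) (by linarith [hs.1]))
          _ = ENNReal.ofReal K ^ (2:ℝ) *
                ∫⁻ s in Set.Ioc (t-1) t, (‖𝒜 s x‖₊ : ℝ≥0∞) ^ (2:ℝ) :=
              lintegral_const_mul' _ _
                (ENNReal.rpow_ne_top_of_nonneg (by norm_num) ENNReal.ofReal_ne_top)
          _ ≤ ENNReal.ofReal K ^ (2:ℝ) *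
                ∫⁻ s in Set.Ioc (0:ℝ) (n:ℝ), (‖𝒜 s x‖₊ : ℝ≥0∞) ^ (2:ℝ) :=
              mul_le_mul_right (lintegral_mono_set hsub) _
          _ ≤ ENNReal.ofReal K ^ (2:ℝ) * ENNReal.ofReal (C * ‖x‖) ^ (2:ℝ) :=
              mul_le_mul_right (hInt n x) _
      have key2 : (‖𝒜 t x‖₊ : ℝ≥0∞) ^ (2:ℝ) ≤
          (ENNReal.ofReal (K * (C * ‖x‖))) ^ (2:ℝ) := by
        rw [ENNReal.ofReal_one, one_mul] at key
        rwa [ENNReal.ofReal_mul (by linarith : (0:ℝ) ≤ K),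
          ENNReal.mul_rpow_of_nonneg _ _ (by norm_num : (0:ℝ) ≤ 2)]
      have key3 := datko_sq_le key2
      rw [← enorm_eq_nnnorm, ← ofReal_norm] at key3
      have := (ENNReal.ofReal_le_ofReal_iff
        (mul_nonneg (by linarith) (mul_nonneg (by linarith) (norm_nonneg x)))).mp key3
      linarith [this, mul_assoc K C ‖x‖ ▸ this]
  set L := K * C with hLdef
  have hL1 : (1:ℝ) ≤ L := by nlinarith
  -- Step E : decay at time t₁
  set t₁ := 4 * (L * C)^2 + 1 with ht₁def
  have ht₁1 : (1:ℝ) ≤ t₁ := by nlinarith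
  have hhalf : ∀ x : H, ‖𝒜 t₁ x‖ ≤ (1/2) * ‖x‖ := by
    intro x
    set n := ⌈t₁⌉₊ with hn
    have hsub : Set.Ioc (0:ℝ) t₁ ⊆ Set.Ioc (0:ℝ) (n:ℝ) :=
      fun s hs => ⟨hs.1, le_trans hs.2 (Nat.le_ceil t₁)⟩
    have key : ENNReal.ofReal t₁ * (‖𝒜 t₁ x‖₊ : ℝ≥0∞) ^ (2:ℝ) ≤
        ENNReal.ofReal L ^ (2:ℝ) * ENNReal.ofReal (C * ‖x‖) ^ (2:ℝ) := by
      have e1 : (∫⁻ _ in Set.Ioc (0:ℝ) t₁, (‖𝒜 t₁ x‖₊ : ℝ≥0∞) ^ (2:ℝ)) =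
          (‖𝒜 t₁ x‖₊ : ℝ≥0∞) ^ (2:ℝ) * ENNReal.ofReal t₁ := by
        rw [setLIntegral_const, Real.volume_Ioc, sub_zero]
      calc ENNReal.ofReal t₁ * (‖𝒜 t₁ x‖₊ : ℝ≥0∞) ^ (2:ℝ)
          = (∫⁻ _ in Set.Ioc (0:ℝ) t₁, (‖𝒜 t₁ x‖₊ : ℝ≥0∞) ^ (2:ℝ)) := by
            rw [e1, mul_comm]
        _ ≤ ∫⁻ s in Set.Ioc (0:ℝ) t₁,
              ENNReal.ofReal L ^ (2:ℝ) * (‖𝒜 s x‖₊ : ℝ≥0∞) ^ (2:ℝ) := by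
            refine lintegral_mono_ae ?_
            filter_upwards [ae_restrict_mem measurableSet_Ioc] with s hs
            exact hptw t₁ s L x hs.1.le (by linarith [hs.2])
              (hunif _ (by linarith [hs.2]))
        _ = ENNReal.ofReal L ^ (2:ℝ) *
              ∫⁻ s in Set.Ioc (0:ℝ) t₁, (‖𝒜 s x‖₊ : ℝ≥0∞) ^ (2:ℝ) :=
            lintegral_const_mul' _ _
              (ENNReal.rpow_ne_top_of_nonneg (by norm_num) ENNReal.ofReal_ne_top)
        _ ≤ ENNReal.ofReal L ^ (2:ℝ) *
              ∫⁻ s in Set.Ioc (0:ℝ) (n:ℝ), (‖𝒜 s x‖₊ : ℝ≥0∞) ^ (2:ℝ) :=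
            mul_le_mul_right (lintegral_mono_set hsub) _
        _ ≤ ENNReal.ofReal L ^ (2:ℝ) * ENNReal.ofReal (C * ‖x‖) ^ (2:ℝ) :=
            mul_le_mul_right (hInt n x) _
    -- pass to the real inequality
    have hLCx : (0:ℝ) ≤ L * (C * ‖x‖) :=
      mul_nonneg (by linarith) (mul_nonneg (by linarith) (norm_nonneg x))
    have key2 : ENNReal.ofReal t₁ * (‖𝒜 t₁ x‖₊ : ℝ≥0∞) ^ (2:ℝ) ≤
        ENNReal.ofReal ((L * (C * ‖x‖)) ^ 2) := by
      rw [← datko_ofReal_sq _ hLCx, ENNReal.ofReal_mul (by linarith : (0:ℝ) ≤ L),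
        ENNReal.mul_rpow_of_nonneg _ _ (by norm_num : (0:ℝ) ≤ 2)]
      exact key
    have hreal : (L * (C * ‖x‖)) ^ 2 ≤ t₁ * ((1/2) * ‖x‖) ^ 2 := by
      nlinarith [sq_nonneg ‖x‖, norm_nonneg x]
    have key3 : ENNReal.ofReal t₁ * (‖𝒜 t₁ x‖₊ : ℝ≥0∞) ^ (2:ℝ) ≤
        ENNReal.ofReal t₁ * ENNReal.ofReal (((1/2) * ‖x‖) ^ 2) :=
      key2.trans (by
        rw [← ENNReal.ofReal_mul (by linarith : (0:ℝ) ≤ t₁)]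
        exact ENNReal.ofReal_le_ofReal hreal)
    have key4 : (‖𝒜 t₁ x‖₊ : ℝ≥0∞) ^ (2:ℝ) ≤ ENNReal.ofReal (((1/2) * ‖x‖) ^ 2) :=
      (ENNReal.mul_le_mul_iff_right (by simp; linarith) ENNReal.ofReal_ne_top).mp key3
    have key5 : (‖𝒜 t₁ x‖₊ : ℝ≥0∞) ≤ ENNReal.ofReal ((1/2) * ‖x‖) := by
      refine datko_sq_le ?_
      rwa [datko_ofReal_sq _ (by positivity)]
    rw [← enorm_eq_nnnorm, ← ofReal_norm] at key5
    exact (ENNReal.ofReal_le_ofReal_iff (by positivity)).mp key5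
  -- Step F : iterate
  have hstep : ∀ s : ℝ, 0 ≤ s → ∀ x : H, ‖𝒜 (t₁ + s) x‖ ≤ (1/2) * ‖𝒜 s x‖ := by
    intro s hs x
    rw [hsg t₁ s (by linarith) hs, ContinuousLinearMap.comp_apply]
    exact hhalf _
  have hiter : ∀ n : ℕ, ∀ t : ℝ, (n:ℝ) * t₁ ≤ t → ∀ x : H,
      ‖𝒜 t x‖ ≤ L * (1/2)^n * ‖x‖ := by
    intro n
    induction n with
    | zero =>
      intro t ht x
      have h0t : 0 ≤ t := by simpa using ht
      calc ‖𝒜 t x‖ ≤ ‖𝒜 t‖ * ‖x‖ := (𝒜 t).le_opNorm x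
        _ ≤ L * ‖x‖ := mul_le_mul_of_nonneg_right (hunif t h0t) (norm_nonneg x)
        _ = L * (1/2)^0 * ‖x‖ := by norm_num
    | succ n ih =>
      intro t ht x
      have h1 : (n:ℝ) * t₁ ≤ t - t₁ := by push_cast at ht; nlinarith
      have h2 : 0 ≤ t - t₁ := le_trans (by positivity) h1
      have h3 : 𝒜 t = 𝒜 (t₁ + (t - t₁)) := by ring_nf
      calc ‖𝒜 t x‖ = ‖𝒜 (t₁ + (t - t₁)) x‖ := by rw [← h3]
        _ ≤ (1/2) * ‖𝒜 (t - t₁) x‖ := hstep _ h2 x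
        _ ≤ (1/2) * (L * (1/2)^n * ‖x‖) := by
            have := ih (t - t₁) h1 x; linarith
        _ = L * (1/2)^(n+1) * ‖x‖ := by ring
  -- conclusion
  have ht₁0 : (0:ℝ) < t₁ := by linarith
  have hlog : (0:ℝ) < Real.log 2 := Real.log_pos one_lt_two
  refine ⟨2 * L, Real.log 2 / t₁, by linarith, div_pos hlog ht₁0, ?_⟩
  intro t ht
  have hM0 : (0:ℝ) ≤ 2 * L * Real.exp (-(Real.log 2 / t₁) * t) :=
    mul_nonneg (by linarith) (Real.exp_nonneg _)
  refine ContinuousLinearMap.opNorm_le_bound _ hM0 fun x => ?_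
  set n := ⌊t / t₁⌋₊ with hn
  have hnt : (n:ℝ) * t₁ ≤ t := by
    have h := Nat.floor_le (div_nonneg ht ht₁0.le)
    calc (n:ℝ) * t₁ ≤ (t / t₁) * t₁ := mul_le_mul_of_nonneg_right h ht₁0.le
      _ = t := div_mul_cancel₀ t ht₁0.ne'
  have hb := hiter n t hnt x
  have hexp : L * (1/2)^n ≤ 2 * L * Real.exp (-(Real.log 2 / t₁) * t) := by
    have hhe : ((1:ℝ)/2)^n = Real.exp (-((n:ℝ) * Real.log 2)) := by
      rw [Real.exp_neg, Real.exp_nat_mul, Real.exp_log (by norm_num : (0:ℝ) < 2),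
        one_div, inv_pow]
    have hlt : t / t₁ < (n:ℝ) + 1 := Nat.lt_floor_add_one _
    have harg : -((n:ℝ) * Real.log 2) ≤ Real.log 2 + -(Real.log 2 / t₁) * t := by
      have he : (Real.log 2 / t₁) * t = Real.log 2 * (t / t₁) := by ring
      nlinarith [mul_le_mul_of_nonneg_left hlt.le hlog.le]
    calc L * (1/2)^n = L * Real.exp (-((n:ℝ) * Real.log 2)) := by rw [hhe]
      _ ≤ L * (Real.exp (Real.log 2) * Real.exp (-(Real.log 2 / t₁) * t)) := by
          rw [← Real.exp_add]
          exact mul_le_mul_of_nonneg_left (Real.exp_le_exp.mpr harg) (by linarith)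
      _ = 2 * L * Real.exp (-(Real.log 2 / t₁) * t) := by
          rw [Real.exp_log (by norm_num : (0:ℝ) < 2)]; ring
  calc ‖𝒜 t x‖ ≤ L * (1/2)^n * ‖x‖ := hb
    _ ≤ 2 * L * Real.exp (-(Real.log 2 / t₁) * t) * ‖x‖ :=
      mul_le_mul_of_nonneg_right hexp (norm_nonneg x)
end

section
/- Let H be a Hilbert space and let (P, K_t) and (P̃, K̃_t) be two families solving the following discrete-time-like stationarity relations with respect to operator families 𝒜_○^t, 𝒜̃_○^t ∈ B(H) and output families: P = (𝒜̃_○^t)* P 𝒜_○^t + Q_t and P̃* = (𝒜_○^t)* P̃* 𝒜̃_○^t + Q_t* for all t ≥ 0 with the same cross term Q_t ∈ B(H). If 𝒜_○^t x → 0 and 𝒜̃_○^t x → 0 strongly as t → ∞ for every x ∈ H, then P = P̃*. In particular, a strongly internally stabilizing self-adjoint solution of such a Riccati-type stationarity system is unique. -/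
open Filter Topology

/-- proof of Theorem 7.6: if `P` and `P̃*` satisfy the same Riccati-type
stationarity relation `P = (𝒜̃ᵗ)* P 𝒜ᵗ + Qₜ` with the same cross term `Qₜ`, and both
closed-loop families `𝒜ᵗ, 𝒜̃ᵗ` converge strongly to `0`, then `P = P̃*`; in particular a
strongly internally stabilizing solution of such a system is unique. -/
theorem stmt19 {H : Type*} [NormedAddCommGroup H] [InnerProductSpace ℂ H] [CompleteSpace H]
    (A At : ℝ → H →L[ℂ] H) (Q : ℝ → H →L[ℂ] H) (P Pt : H →L[ℂ] H)
    (h1 : ∀ t : ℝ, 0 ≤ t →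
      P = ((ContinuousLinearMap.adjoint (At t)).comp (P.comp (A t))) + Q t)
    (h2 : ∀ t : ℝ, 0 ≤ t →
      ContinuousLinearMap.adjoint Pt
        = ((ContinuousLinearMap.adjoint (At t)).comp
            ((ContinuousLinearMap.adjoint Pt).comp (A t))) + Q t)
    (hA : ∀ x : H, Tendsto (fun t => A t x) atTop (𝓝 0))
    (hAt : ∀ x : H, Tendsto (fun t => At t x) atTop (𝓝 0)) :
    P = ContinuousLinearMap.adjoint Pt := by
  set D := P - ContinuousLinearMap.adjoint Pt with hDdef
  have key : ∀ t : ℝ, 0 ≤ t → ∀ x : H,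
      D x = (ContinuousLinearMap.adjoint (At t)) (D (A t x)) := by
    intro t ht x
    have e1 := congrArg (fun M : H →L[ℂ] H => M x) (h1 t ht)
    have e2 := congrArg (fun M : H →L[ℂ] H => M x) (h2 t ht)
    simp only [ContinuousLinearMap.add_apply, ContinuousLinearMap.comp_apply] at e1 e2
    simp only [hDdef, ContinuousLinearMap.sub_apply, map_sub]
    rw [e1, e2]
    abel
  have hD0 : ∀ x : H, D x = 0 := by
    intro x
    have htend : Tendsto (fun t => (inner ℂ (At t (D x)) (D (A t x)) : ℂ)) atTop (𝓝 0) := by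
      have h1' := hAt (D x)
      have h2' : Tendsto (fun t => D (A t x)) atTop (𝓝 0) := by
        simpa [Function.comp_def] using (D.continuous.tendsto 0).comp (hA x)
      simpa using h1'.inner (𝕜 := ℂ) h2'
    have heq : (fun _ : ℝ => (inner ℂ (D x) (D x) : ℂ)) =ᶠ[atTop]
        fun t => (inner ℂ (At t (D x)) (D (A t x)) : ℂ) := by
      filter_upwards [eventually_ge_atTop (0 : ℝ)] with t ht
      nth_rewrite 2 [key t ht x]
      rw [ContinuousLinearMap.adjoint_inner_right]
    have : Tendsto (fun _ : ℝ => (inner ℂ (D x) (D x) : ℂ)) atTop (𝓝 0) :=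
      htend.congr' heq.symm
    have hval : (inner ℂ (D x) (D x) : ℂ) = 0 :=
      tendsto_nhds_unique tendsto_const_nhds this
    exact inner_self_eq_zero.mp hval
  have : D = 0 := ContinuousLinearMap.ext fun x => hD0 x
  have := sub_eq_zero.mp this
  exact this
end
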